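/- For every n ≥ 2 and every finite field F_q, there exist three linearly independent upper triangular matrices A_1, A_2, A_3 ∈ F_q^{n×n} such that every nonzero F_q-linear combination λ_1 A_1 + λ_2 A_2 + λ_3 A_3 has rank at least n−1. -/

import Mathlib

open Matrix Finset

/-- Sum of a "single-entry band" row against a vector. -/
private lemma band_sum {F : Type*} [Field F] {n : ℕ} (g : Fin n → F) (K : ℕ) (x : F) :
    (∑ j : Fin n, (if (j : ℕ) = K then x else 0) * g j)
      = x * (if h : K < n then g ⟨K, h⟩ else 0) := by
  by_cases h : K < n
  · rw [dif_pos h, Finset.sum_eq_single (⟨K, h⟩ : Fin n)]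
    · simp
    · intro j _ hj
      rw [if_neg, zero_mul]
      intro hc
      exact hj (Fin.ext hc)
    · intro hc
      exact absurd (Finset.mem_univ _) hc
  · rw [dif_neg h, mul_zero]
    apply Finset.sum_eq_zero
    intro j _
    rw [if_neg, zero_mul]
    intro hc
    exact h (hc ▸ j.isLt)

/-- If after deleting one column the remaining columns are linearly independent,
then the rank is at least `m + 1`. -/
private lemma aux_rank {F : Type*} [Field F] {m : ℕ}
    (M : Matrix (Fin (m + 2)) (Fin (m + 2)) F) (j₀ : Fin (m + 2))
    (h : ∀ g : Fin (m + 2) → F, M.mulVec g = 0 → g j₀ = 0 → g = 0) :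
    m + 1 ≤ M.rank := by
  classical
  set Ms : Matrix (Fin (m + 2)) (Fin (m + 1)) F := M.submatrix id j₀.succAbove with hMs
  have hMv : ∀ c : Fin (m + 1) → F, M.mulVec (j₀.insertNth 0 c) = Ms.mulVec c := by
    intro c
    funext i
    simp only [Matrix.mulVec, dotProduct]
    rw [Fin.sum_univ_succAbove (fun j => M i j * j₀.insertNth (α := fun _ => F) 0 c j) j₀]
    simp [hMs, Fin.insertNth_apply_same, Fin.insertNth_apply_succAbove,
      Matrix.submatrix_apply]
  have hker : LinearMap.ker Ms.mulVecLin = ⊥ := by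
    rw [LinearMap.ker_eq_bot']
    intro c hc
    rw [Matrix.mulVecLin_apply] at hc
    have hg : M.mulVec (j₀.insertNth 0 c) = 0 := by rw [hMv]; exact hc
    have hzero := h (j₀.insertNth 0 c) hg (Fin.insertNth_apply_same (α := fun _ => F) j₀ 0 c)
    funext k
    have hk := congrFun hzero (j₀.succAbove k)
    rw [Fin.insertNth_apply_succAbove] at hk
    exact hk
  have hrange : LinearMap.range Ms.mulVecLin ≤ LinearMap.range M.mulVecLin := by
    rintro y ⟨c, rfl⟩
    exact ⟨j₀.insertNth 0 c, by rw [Matrix.mulVecLin_apply, Matrix.mulVecLin_apply, hMv]⟩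
  have h2 := LinearMap.finrank_range_add_finrank_ker Ms.mulVecLin
  rw [hker, finrank_bot, add_zero, Module.finrank_pi, Fintype.card_fin] at h2
  calc m + 1 = Ms.rank := h2.symm
    _ ≤ M.rank := Submodule.finrank_mono hrange

/-- Descending induction helper. -/
private lemma desc_zero {F : Type*} [Field F] (G : ℕ → F) (N : ℕ)
    (hb : ∀ K, N ≤ K → G K = 0)
    (hstep : ∀ K, K < N → (∀ K', K < K' → G K' = 0) → G K = 0) :
    ∀ K, G K = 0 := by
  have main : ∀ dist K, N ≤ K + dist → G K = 0 := by
    intro dist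
    induction dist with
    | zero => intro K hK; exact hb K (by omega)
    | succ dd ih =>
      intro K hK
      by_cases hKN : K < N
      · exact hstep K hKN (fun K' hK' => ih K' (by omega))
      · exact hb K (by omega)
  intro K; exact main N K (by omega)

/-- For every `n ≥ 2` and finite field `F`, there exist three linearly independent
upper triangular `n×n` matrices all of whose nonzero linear combinations have rank
at least `n − 1`. -/
theorem stmt3 {F : Type*} [Field F] [Fintype F] {n : ℕ} (hn : 2 ≤ n) :
    ∃ A₁ A₂ A₃ : Matrix (Fin n) (Fin n) F,
      A₁.BlockTriangular id ∧ A₂.BlockTriangular id ∧ A₃.BlockTriangular id ∧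
      LinearIndependent F ![A₁, A₂, A₃] ∧
      ∀ l₁ l₂ l₃ : F, ¬(l₁ = 0 ∧ l₂ = 0 ∧ l₃ = 0) →
        n - 1 ≤ (l₁ • A₁ + l₂ • A₂ + l₃ • A₃).rank := by
  classical
  obtain ⟨m, rfl⟩ : ∃ m, n = m + 2 := ⟨n - 2, by omega⟩
  -- choose `v` with `x² + vx - 1` having no root
  obtain ⟨v, hv⟩ : ∃ v : F, ∀ x : F, x ^ 2 + v * x - 1 ≠ 0 := by
    have hcard : ((Finset.univ.erase (0 : F)).image
        (fun x : F => (1 - x ^ 2) * x⁻¹)).card < Fintype.card F := by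
      calc _ ≤ (Finset.univ.erase (0 : F)).card := Finset.card_image_le
        _ < Finset.univ.card := Finset.card_erase_lt_of_mem (Finset.mem_univ _)
        _ = Fintype.card F := Finset.card_univ
    have hex : ∃ v : F,
        v ∉ (Finset.univ.erase (0 : F)).image (fun x : F => (1 - x ^ 2) * x⁻¹) := by
      by_contra hc
      push_neg at hc
      have hle := Finset.card_le_card
        (show (Finset.univ : Finset F) ⊆ _ from fun x _ => hc x)
      rw [Finset.card_univ] at hle
      omega
    obtain ⟨v, hvmem⟩ := hex
    refine ⟨v, fun x hx => hvmem ?_⟩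
    have hx0 : x ≠ 0 := by
      rintro rfl
      simp at hx
    refine Finset.mem_image.mpr ⟨x, Finset.mem_erase.mpr ⟨hx0, Finset.mem_univ _⟩, ?_⟩
    field_simp
    linear_combination -hx
  have hv0 : v ≠ 0 := fun h => hv 1 (by rw [h]; ring)
  -- choose `w` with `x² - vx + w` having no root
  obtain ⟨w, hw⟩ : ∃ w : F, ∀ x : F, x ^ 2 - v * x + w ≠ 0 := by
    have hsub : (Finset.univ.image (fun x : F => v * x - x ^ 2)) ⊆
        (Finset.univ.erase v).image (fun x : F => v * x - x ^ 2) := by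
      intro y hy
      obtain ⟨x, -, rfl⟩ := Finset.mem_image.mp hy
      by_cases hx : x = v
      · subst hx
        exact Finset.mem_image.mpr
          ⟨0, Finset.mem_erase.mpr ⟨Ne.symm hv0, Finset.mem_univ _⟩, by ring⟩
      · exact Finset.mem_image.mpr ⟨x, Finset.mem_erase.mpr ⟨hx, Finset.mem_univ _⟩, rfl⟩
    have hcard : (Finset.univ.image (fun x : F => v * x - x ^ 2)).card < Fintype.card F := by
      calc _ ≤ ((Finset.univ.erase v).image (fun x : F => v * x - x ^ 2)).card :=
            Finset.card_le_card hsub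
        _ ≤ (Finset.univ.erase v).card := Finset.card_image_le
        _ < Finset.univ.card := Finset.card_erase_lt_of_mem (Finset.mem_univ _)
        _ = Fintype.card F := Finset.card_univ
    have hex : ∃ w : F, w ∉ Finset.univ.image (fun x : F => v * x - x ^ 2) := by
      by_contra hc
      push_neg at hc
      have hle := Finset.card_le_card
        (show (Finset.univ : Finset F) ⊆ _ from fun x _ => hc x)
      rw [Finset.card_univ] at hle
      omega
    obtain ⟨w, hwmem⟩ := hex
    refine ⟨w, fun x hx => hwmem ?_⟩
    exact Finset.mem_image.mpr ⟨x, Finset.mem_univ _, by linear_combination -hx⟩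
  -- the three matrices
  set A2 : Matrix (Fin (m + 2)) (Fin (m + 2)) F :=
    Matrix.of (fun i j => if (i : ℕ) + 1 = (j : ℕ) then 1 else 0) with hA2
  set A3 : Matrix (Fin (m + 2)) (Fin (m + 2)) F :=
    Matrix.of (fun i j =>
      if (i : ℕ) % 2 = 1 then
        (if (j : ℕ) = (i : ℕ) then 1 else if (j : ℕ) = (i : ℕ) + 1 then v
          else if (j : ℕ) = (i : ℕ) + 2 then w else 0)
      else (if (j : ℕ) = (i : ℕ) + 2 then 1 else 0)) with hA3
  refine ⟨1, A2, A3, Matrix.blockTriangular_one, ?_, ?_, ?_, ?_⟩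
  · -- A2 is upper triangular
    intro i j hij
    have hj : (j : ℕ) < (i : ℕ) := hij
    simp only [hA2, Matrix.of_apply]
    rw [if_neg]
    omega
  · -- A3 is upper triangular
    intro i j hij
    have hj : (j : ℕ) < (i : ℕ) := hij
    simp only [hA3, Matrix.of_apply]
    split_ifs <;> first | rfl | (exfalso; omega)
  · -- linear independence
    rw [Fintype.linearIndependent_iff]
    intro g hg
    simp only [Fin.sum_univ_three, Matrix.cons_val_zero, Matrix.cons_val_one,
      Matrix.head_cons, Matrix.cons_val_two, Matrix.tail_cons] at hg
    have h00 := congrFun (congrFun hg 0) 0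
    have h01 := congrFun (congrFun hg 0) 1
    have h11 := congrFun (congrFun hg 1) 1
    simp only [hA2, hA3, Matrix.add_apply, Matrix.smul_apply, Matrix.one_apply,
      Matrix.of_apply, Matrix.zero_apply, smul_eq_mul, Fin.ext_iff, Fin.val_zero,
      Fin.val_one] at h00 h01 h11
    norm_num at h00 h01 h11
    intro i
    fin_cases i
    · exact h00
    · exact h01
    · have : g 2 = 0 := by linear_combination h11 - h00
      exact this
  · -- the rank bound
    intro l₁ l₂ l₃ hl
    have hsub1 : m + 2 - 1 = m + 1 := rfl
    rw [hsub1]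
    set d : ℕ → F := fun k => if k % 2 = 1 then l₁ + l₃ else l₁ with hd
    set u : ℕ → F := fun k => if k % 2 = 1 then l₂ + l₃ * v else l₂ with hu
    set e : ℕ → F := fun k => if k % 2 = 1 then l₃ * w else l₃ with he
    have entry : ∀ i j : Fin (m + 2),
        (l₁ • (1 : Matrix (Fin (m + 2)) (Fin (m + 2)) F) + l₂ • A2 + l₃ • A3) i j
          = (if (j : ℕ) = (i : ℕ) then d (i : ℕ) else 0)
            + (if (j : ℕ) = (i : ℕ) + 1 then u (i : ℕ) else 0)
            + (if (j : ℕ) = (i : ℕ) + 2 then e (i : ℕ) else 0) := by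
      intro i j
      simp only [hA2, hA3, hd, hu, he, Matrix.add_apply, Matrix.smul_apply,
        Matrix.one_apply, Matrix.of_apply, smul_eq_mul, Fin.ext_iff]
      split_ifs <;> first | ring1 | (exfalso; omega)
    have key : ∀ j₀ : Fin (m + 2),
        (∀ g : Fin (m + 2) → F, g j₀ = 0 →
          (∀ i : Fin (m + 2),
            d (i : ℕ) * (if h : (i : ℕ) < m + 2 then g ⟨(i : ℕ), h⟩ else 0)
            + u (i : ℕ) * (if h : (i : ℕ) + 1 < m + 2 then g ⟨(i : ℕ) + 1, h⟩ else 0)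
            + e (i : ℕ) * (if h : (i : ℕ) + 2 < m + 2 then g ⟨(i : ℕ) + 2, h⟩ else 0) = 0)
          → g = 0) →
        m + 1 ≤ (l₁ • (1 : Matrix (Fin (m + 2)) (Fin (m + 2)) F) + l₂ • A2 + l₃ • A3).rank := by
      intro j₀ hstep
      apply aux_rank _ j₀
      intro g hMg hg0
      apply hstep g hg0
      intro i
      have hi := congrFun hMg i
      simp only [Matrix.mulVec, dotProduct, Pi.zero_apply] at hi
      simp only [entry, add_mul] at hi
      rw [Finset.sum_add_distrib, Finset.sum_add_distrib, band_sum, band_sum, band_sum] at hi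
      exact hi
    by_cases h1 : l₁ = 0
    · by_cases h3 : l₃ = 0
      · -- case 2': only l₂ ≠ 0
        have h2 : l₂ ≠ 0 := by tauto
        apply key 0
        intro g hg0 hrow
        set G : ℕ → F := fun K => if h : K < m + 2 then g ⟨K, h⟩ else 0 with hG
        have hall : ∀ K, G K = 0 := by
          apply desc_zero G (m + 2) (fun K hK => by simp only [hG]; rw [dif_neg (by omega)])
          intro K hKN ih
          rcases Nat.eq_zero_or_pos K with hK0 | hKpos
          · subst hK0
            simp only [hG]
            rw [dif_pos (by omega : 0 < m + 2)]
            exact hg0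
          · have hr := hrow ⟨K - 1, by omega⟩
            simp only [show ((⟨K - 1, by omega⟩ : Fin (m + 2)) : ℕ) = K - 1 from rfl] at hr
            rw [show K - 1 + 1 = K by omega, show K - 1 + 2 = K + 1 by omega] at hr
            have hGK1 : G (K + 1) = 0 := ih _ (by omega)
            simp only [hG] at hGK1
            rw [hGK1, mul_zero, add_zero] at hr
            simp only [hd, hu, he, h1, h3, add_zero, zero_add, zero_mul, mul_zero,
              ite_self] at hr
            have : l₂ * G K = 0 := by
              simp only [hG]
              exact hr
            exact (mul_eq_zero.mp this).resolve_left h2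
        funext j
        have hj := hall (j : ℕ)
        simp only [hG] at hj
        rw [dif_pos j.isLt] at hj
        simpa using hj
      · -- case 2: l₁ = 0, l₃ ≠ 0
        apply key 0
        intro g hg0 hrow
        set G : ℕ → F := fun K => if h : K < m + 2 then g ⟨K, h⟩ else 0 with hG
        have hquad : l₂ ^ 2 + l₂ * l₃ * v - l₃ ^ 2 ≠ 0 := by
          intro hq
          apply hv (l₂ * l₃⁻¹)
          field_simp
          linear_combination hq
        have hall : ∀ K, G K = 0 := by
          apply desc_zero G (m + 2) (fun K hK => by simp only [hG]; rw [dif_neg (by omega)])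
          intro K hKN ih
          rcases Nat.eq_zero_or_pos K with hK0 | hKpos
          · subst hK0
            simp only [hG]
            rw [dif_pos (by omega : 0 < m + 2)]
            exact hg0
          · by_cases hKpar : K % 2 = 1
            · -- K odd : use row K directly
              have hr := hrow ⟨K, by omega⟩
              simp only [show ((⟨K, by omega⟩ : Fin (m + 2)) : ℕ) = K from rfl] at hr
              have e1 : (if h : K + 1 < m + 2 then g ⟨K + 1, h⟩ else 0) = 0 := by
                have := ih (K + 1) (by omega); simpa only [hG] using this
              have e2 : (if h : K + 2 < m + 2 then g ⟨K + 2, h⟩ else 0) = 0 := by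
                have := ih (K + 2) (by omega); simpa only [hG] using this
              rw [e1, e2, mul_zero, mul_zero, add_zero, add_zero] at hr
              simp only [hd, if_pos hKpar, h1, zero_add] at hr
              have : l₃ * G K = 0 := by simp only [hG]; exact hr
              exact (mul_eq_zero.mp this).resolve_left h3
            · -- K even, K ≥ 2 : combine rows K-1 and K-2
              have hK2 : 2 ≤ K := by omega
              have hrA := hrow ⟨K - 1, by omega⟩
              have hrB := hrow ⟨K - 2, by omega⟩
              simp only [show ((⟨K - 1, by omega⟩ : Fin (m + 2)) : ℕ) = K - 1 from rfl] at hrA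
              simp only [show ((⟨K - 2, by omega⟩ : Fin (m + 2)) : ℕ) = K - 2 from rfl] at hrB
              rw [show K - 1 + 1 = K by omega, show K - 1 + 2 = K + 1 by omega] at hrA
              rw [show K - 2 + 1 = K - 1 by omega, show K - 2 + 2 = K by omega] at hrB
              have eK1 : (if h : K + 1 < m + 2 then g ⟨K + 1, h⟩ else 0) = 0 := by
                have := ih (K + 1) (by omega); simpa only [hG] using this
              rw [eK1, mul_zero, add_zero] at hrA
              simp only [hd, hu, he, if_pos (show (K - 1) % 2 = 1 by omega),
                if_neg (show ¬(K - 2) % 2 = 1 by omega), h1, zero_add, zero_mul] at hrA hrB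
              -- hrA : l₃ * G (K-1) + (l₂ + l₃ * v) * G K = 0
              -- hrB : l₂ * G (K-1) + l₃ * G K = 0
              have hrA' : l₃ * G (K - 1) + (l₂ + l₃ * v) * G K = 0 := by
                simp only [hG]; linear_combination hrA
              have hrB' : l₂ * G (K - 1) + l₃ * G K = 0 := by
                simp only [hG]; linear_combination hrB
              have hcomb : (l₂ ^ 2 + l₂ * l₃ * v - l₃ ^ 2) * G K = 0 := by
                linear_combination l₂ * hrA' - l₃ * hrB'
              exact (mul_eq_zero.mp hcomb).resolve_left hquad
        funext j
        have hj := hall (j : ℕ)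
        simp only [hG] at hj
        rw [dif_pos j.isLt] at hj
        simpa using hj
    · by_cases h13 : l₁ + l₃ = 0
      · -- case 3: l₁ ≠ 0, l₃ = -l₁
        have h1n : l₁ ≠ 0 := h1
        apply key 1
        intro g hg0 hrow
        set G : ℕ → F := fun K => if h : K < m + 2 then g ⟨K, h⟩ else 0 with hG
        have hquad : l₂ ^ 2 - l₁ * v * l₂ + l₁ ^ 2 * w ≠ 0 := by
          intro hq
          apply hw (l₂ * l₁⁻¹)
          field_simp
          linear_combination hq
        have hall : ∀ K, G K = 0 := by
          apply desc_zero G (m + 2) (fun K hK => by simp only [hG]; rw [dif_neg (by omega)])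
          intro K hKN ih
          by_cases hKpar : K % 2 = 1
          · rcases Nat.lt_or_ge K 3 with hK1 | hK3
            · -- K = 1 : the deleted column
              have hKeq : K = 1 := by omega
              subst hKeq
              simp only [hG]
              rw [dif_pos (by omega : 1 < m + 2)]
              have hcast : (⟨1, by omega⟩ : Fin (m + 2)) = 1 := by
                apply Fin.ext
                simp [Fin.val_one]
              rw [hcast]
              exact hg0
            · -- K odd, K ≥ 3 : combine rows K-2 and K-1
              have hrA := hrow ⟨K - 2, by omega⟩
              have hrB := hrow ⟨K - 1, by omega⟩
              simp only [show ((⟨K - 2, by omega⟩ : Fin (m + 2)) : ℕ) = K - 2 from rfl] at hrA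
              simp only [show ((⟨K - 1, by omega⟩ : Fin (m + 2)) : ℕ) = K - 1 from rfl] at hrB
              rw [show K - 2 + 1 = K - 1 by omega, show K - 2 + 2 = K by omega] at hrA
              rw [show K - 1 + 1 = K by omega, show K - 1 + 2 = K + 1 by omega] at hrB
              have eK1 : (if h : K + 1 < m + 2 then g ⟨K + 1, h⟩ else 0) = 0 := by
                have := ih (K + 1) (by omega); simpa only [hG] using this
              rw [eK1, mul_zero, add_zero] at hrB
              simp only [hd, hu, he, if_pos (show (K - 2) % 2 = 1 by omega),
                if_neg (show ¬(K - 1) % 2 = 1 by omega)] at hrA hrB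
              rw [h13, zero_mul, zero_add] at hrA
              -- hrA : (l₂ + l₃v) * G(K-1) + l₃w * G K = 0
              -- hrB : l₁ * G(K-1) + l₂ * G K = 0
              have hrA' : (l₂ + l₃ * v) * G (K - 1) + l₃ * w * G K = 0 := by
                simp only [hG]; linear_combination hrA
              have hrB' : l₁ * G (K - 1) + l₂ * G K = 0 := by
                simp only [hG]; linear_combination hrB
              have hcomb : (l₂ ^ 2 - l₁ * v * l₂ + l₁ ^ 2 * w) * G K = 0 := by
                linear_combination (-l₁) * hrA' + (l₂ + l₃ * v) * hrB'
                  + (l₁ * w - v * l₂) * (G K) * h13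
              exact (mul_eq_zero.mp hcomb).resolve_left hquad
          · -- K even : use row K directly
            have hr := hrow ⟨K, by omega⟩
            simp only [show ((⟨K, by omega⟩ : Fin (m + 2)) : ℕ) = K from rfl] at hr
            have e1 : (if h : K + 1 < m + 2 then g ⟨K + 1, h⟩ else 0) = 0 := by
              have := ih (K + 1) (by omega); simpa only [hG] using this
            have e2 : (if h : K + 2 < m + 2 then g ⟨K + 2, h⟩ else 0) = 0 := by
              have := ih (K + 2) (by omega); simpa only [hG] using this
            rw [e1, e2, mul_zero, mul_zero, add_zero, add_zero] at hr
            simp only [hd, if_neg hKpar] at hr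
            have : l₁ * G K = 0 := by simp only [hG]; exact hr
            exact (mul_eq_zero.mp this).resolve_left h1n
        funext j
        have hj := hall (j : ℕ)
        simp only [hG] at hj
        rw [dif_pos j.isLt] at hj
        simpa using hj
      · -- case 1: all diagonal entries nonzero
        apply key 0
        intro g hg0 hrow
        set G : ℕ → F := fun K => if h : K < m + 2 then g ⟨K, h⟩ else 0 with hG
        have hall : ∀ K, G K = 0 := by
          apply desc_zero G (m + 2) (fun K hK => by simp only [hG]; rw [dif_neg (by omega)])
          intro K hKN ih
          have hr := hrow ⟨K, by omega⟩
          simp only [show ((⟨K, by omega⟩ : Fin (m + 2)) : ℕ) = K from rfl] at hr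
          have e1 : (if h : K + 1 < m + 2 then g ⟨K + 1, h⟩ else 0) = 0 := by
            have := ih (K + 1) (by omega); simpa only [hG] using this
          have e2 : (if h : K + 2 < m + 2 then g ⟨K + 2, h⟩ else 0) = 0 := by
            have := ih (K + 2) (by omega); simpa only [hG] using this
          rw [e1, e2, mul_zero, mul_zero, add_zero, add_zero] at hr
          have hd0 : d K ≠ 0 := by
            simp only [hd]
            split_ifs
            · exact h13
            · exact h1
          have : d K * G K = 0 := by simp only [hG]; exact hr
          exact (mul_eq_zero.mp this).resolve_left hd0
        funext j
        have hj := hall (j : ℕ)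
        simp only [hG] at hj
        rw [dif_pos j.isLt] at hj
        simpa using hj
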